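/- Let (G,∼,R) be a framed turbulence chart and let K̄ = K ∪ B be a bundle (a set of pairwise compatible trails, with K the routes and B the bands). Assume that every nonnegative flow has at most one representation as a bundle combination with all coefficients positive. Then the bundle simplihedron Δ₁(K̄) has vertex set exactly {I(p) : p ∈ K} and its recession cone is minimally generated by {I(B) : B ∈ B}; in particular Δ₁(K̄) = conv({I(p) : p ∈ K}) + cone({I(B) : B ∈ B}) is a minimal presentation and Δ₁(K̄) is a simplihedron. -/

import Mathlib

open Finset

/-- A turbulence chart: a finite undirected graph given by half-edges `H` with a
fixed-point-free involution `op` pairing half-edges into edges, a vertex map `vert`,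
and at each internal vertex a partition of its half-edges into two nonempty classes,
encoded by `side : H → Bool`. -/
structure TurbChart where
  V : Type
  H : Type
  [fintV : Fintype V]
  [decV : DecidableEq V]
  [fintH : Fintype H]
  [decH : DecidableEq H]
  vert : H → V
  op : H → H
  side : H → Bool
  op_op : ∀ h, op (op h) = h
  op_ne : ∀ h, op h ≠ h
  vert_cover : ∀ v, ∃ h, vert h = v
  sides_nonempty : ∀ v,
    2 ≤ (Finset.univ.filter fun h => vert h = v).card →
    ∀ b : Bool, ∃ h, vert h = v ∧ side h = b

attribute [instance] TurbChart.fintV TurbChart.decV TurbChart.fintH TurbChart.decH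

namespace TurbChart

variable (T : TurbChart)

def degree (v : T.V) : ℕ := (Finset.univ.filter fun h => T.vert h = v).card

def Fringe (v : T.V) : Prop := T.degree v = 1

def Internal (v : T.V) : Prop := 2 ≤ T.degree v

instance : DecidablePred T.Fringe := fun v =>
  decidable_of_iff (T.degree v = 1) Iff.rfl

instance : DecidablePred T.Internal := fun v =>
  decidable_of_iff (2 ≤ T.degree v) Iff.rfl

/-- A flow on a turbulence chart: a labelling of edges (encoded as an `op`-invariant
function on half-edges) conserving flow across the two classes at each internal vertex. -/
def IsFlow (F : T.H → ℝ) : Prop :=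
  (∀ h, F (T.op h) = F h) ∧
  ∀ v, T.Internal v →
    ∑ h ∈ Finset.univ.filter (fun h => T.vert h = v ∧ T.side h = true), F h =
    ∑ h ∈ Finset.univ.filter (fun h => T.vert h = v ∧ T.side h = false), F h

/-- The strength of a flow: half the sum of its values over fringe incidences. -/
noncomputable def strength (F : T.H → ℝ) : ℝ :=
  (1 / 2) * ∑ h ∈ Finset.univ.filter (fun h => T.Fringe (T.vert h)), F h

/-- The turbulence polyhedron `F₁(G,∼)`: nonnegative flows of strength 1. -/
def unitFlows : Set (T.H → ℝ) :=
  {F | T.IsFlow F ∧ (∀ h, 0 ≤ F h) ∧ T.strength F = 1}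

/-- A string: a walk along oriented edges (an oriented edge is encoded by its tail
half-edge `a`, its head half-edge being `op a`) which crosses the class partition at
each internal vertex it passes through. -/
def IsString (l : List T.H) : Prop :=
  List.Chain' (fun a b => T.vert (T.op a) = T.vert b ∧ T.side (T.op a) ≠ T.side b) l

/-- A route: a nonempty string starting and ending at fringe vertices. -/
def IsRoute (l : List T.H) : Prop :=
  T.IsString l ∧ l ≠ [] ∧
  (∀ h ∈ l.head?, T.Fringe (T.vert h)) ∧
  (∀ h ∈ l.getLast?, T.Fringe (T.vert (T.op h)))

/-- A band: a nonempty cyclically composable string which is not a proper power. -/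
def IsBand (l : List T.H) : Prop :=
  l ≠ [] ∧ T.IsString (l ++ l) ∧
  ¬ ∃ (c : List T.H) (k : ℕ), 2 ≤ k ∧ l = (List.replicate k c).flatten

def Acyclic : Prop := ¬ ∃ l, T.IsBand l

/-- The indicator vector of a walk: multiplicity of each edge (in either orientation). -/
noncomputable def indic (l : List T.H) : T.H → ℝ :=
  fun h => ((l.count h + l.count (T.op h) : ℕ) : ℝ)

/-- The inverse of a string. -/
def inv (l : List T.H) : List T.H := (l.map T.op).reverse

end TurbChart

/-- A framing on a turbulence chart: a linear order on each class of half-edges. -/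
structure Framing (T : TurbChart) where
  lt : T.H → T.H → Prop
  lt_irrefl : ∀ h, ¬ lt h h
  lt_trans : ∀ a b c, lt a b → lt b c → lt a c
  lt_compat : ∀ a b, lt a b → T.vert a = T.vert b ∧ T.side a = T.side b
  lt_total : ∀ a b, a ≠ b → T.vert a = T.vert b → T.side a = T.side b →
    lt a b ∨ lt b a

namespace TurbChart

variable (T : TurbChart)

/-- Substrings of a trail (a route, or a band where substrings of any power are allowed),
up to inverses. -/
def Substr (t : List T.H) (isBand : Bool) (s : List T.H) : Prop :=
  if isBand then
    ∃ k : ℕ, s <:+: (List.replicate k t).flatten ∨ s <:+: T.inv (List.replicate k t).flatten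
  else s <:+: t ∨ s <:+: T.inv t

/-- `p` contains the "low" member of an incompatibility whose "high" member lies in `q`. -/
def IsIncompatPair (R : Framing T) (p q : List T.H × Bool) : Prop :=
  ∃ (e₁ e₂ f₁ f₂ : T.H) (s : List T.H),
    R.lt (T.op e₁) (T.op e₂) ∧ R.lt f₁ f₂ ∧
    T.IsString (e₁ :: (s ++ [f₁])) ∧ T.IsString (e₂ :: (s ++ [f₂])) ∧
    T.Substr p.1 p.2 (e₁ :: (s ++ [f₁])) ∧ T.Substr q.1 q.2 (e₂ :: (s ++ [f₂]))

def Compatible (R : Framing T) (p q : List T.H × Bool) : Prop :=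
  ¬ (T.IsIncompatPair R p q ∨ T.IsIncompatPair R q p)

/-- A trail: a route (`Bool` component `false`) or a band (`true`). -/
def IsTrail (t : List T.H × Bool) : Prop :=
  if t.2 then T.IsBand t.1 else T.IsRoute t.1

noncomputable def indicT (t : List T.H × Bool) : T.H → ℝ := T.indic t.1

def RouteEquiv (l₁ l₂ : List T.H) : Prop := l₂ = l₁ ∨ l₂ = T.inv l₁

def BandEquiv (l₁ l₂ : List T.H) : Prop :=
  ∃ x y, l₁ = x ++ y ∧ (l₂ = y ++ x ∨ l₂ = T.inv (y ++ x))

def TrailEquiv (t₁ t₂ : List T.H × Bool) : Prop :=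
  t₁.2 = t₂.2 ∧ (if t₁.2 then T.BandEquiv t₁.1 t₂.1 else T.RouteEquiv t₁.1 t₂.1)

/-- A bundle: a set of pairwise compatible (hence self-compatible) trails, taken with
distinct representatives up to equivalence of trails. -/
def IsBundle (R : Framing T) (S : Finset (List T.H × Bool)) : Prop :=
  (∀ t ∈ S, T.IsTrail t) ∧
  (∀ t₁ ∈ S, ∀ t₂ ∈ S, T.Compatible R t₁ t₂) ∧
  (∀ t₁ ∈ S, ∀ t₂ ∈ S, T.TrailEquiv t₁ t₂ → t₁ = t₂)

/-- The bundle simplihedron `Δ₁(K̄)`: unit bundle combinations of the bundle. -/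
def unitBundleSimplihedron (S : Finset (List T.H × Bool)) : Set (T.H → ℝ) :=
  {F | ∃ a : List T.H × Bool → ℝ,
    (∀ t ∈ S, 0 ≤ a t) ∧
    F = ∑ t ∈ S, a t • T.indicT t ∧
    ∑ t ∈ S.filter (fun t => t.2 = false), a t = 1}

/-- Every nonnegative flow has at most one representation as a positive bundle
combination (up to equivalence of trails). -/
def UniquePositiveCombos (R : Framing T) : Prop :=
  ∀ (S₁ S₂ : Finset (List T.H × Bool)) (a₁ a₂ : List T.H × Bool → ℝ),
    T.IsBundle R S₁ → T.IsBundle R S₂ →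
    (∀ t ∈ S₁, 0 < a₁ t) → (∀ t ∈ S₂, 0 < a₂ t) →
    (∑ t ∈ S₁, a₁ t • T.indicT t) = (∑ t ∈ S₂, a₂ t • T.indicT t) →
    (∀ t₁ ∈ S₁, ∃ t₂ ∈ S₂, T.TrailEquiv t₁ t₂ ∧ a₁ t₁ = a₂ t₂) ∧
    (∀ t₂ ∈ S₂, ∃ t₁ ∈ S₁, T.TrailEquiv t₁ t₂ ∧ a₁ t₁ = a₂ t₂)

end TurbChart

open scoped Classical


section Aux

variable {T : TurbChart} {R : Framing T}

lemma subBundle {K S : Finset (List T.H × Bool)} (hS : S ⊆ K) (hK : T.IsBundle R K) :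
    T.IsBundle R S :=
  ⟨fun t ht => hK.1 t (hS ht), fun t₁ h₁ t₂ h₂ => hK.2.1 t₁ (hS h₁) t₂ (hS h₂),
   fun t₁ h₁ t₂ h₂ => hK.2.2 t₁ (hS h₁) t₂ (hS h₂)⟩

lemma coeff_unique {K : Finset (List T.H × Bool)} (hK : T.IsBundle R K)
    (huniq : T.UniquePositiveCombos R) {a a' : List T.H × Bool → ℝ}
    (ha : ∀ t ∈ K, 0 ≤ a t) (ha' : ∀ t ∈ K, 0 ≤ a' t)
    (h : ∑ t ∈ K, a t • T.indicT t = ∑ t ∈ K, a' t • T.indicT t) :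
    ∀ t ∈ K, a t = a' t := by
  classical
  set S₁ := K.filter (fun t => 0 < a t) with hS₁
  set S₂ := K.filter (fun t => 0 < a' t) with hS₂
  have hsub₁ : S₁ ⊆ K := Finset.filter_subset _ _
  have hsub₂ : S₂ ⊆ K := Finset.filter_subset _ _
  have e₁ : ∑ t ∈ S₁, a t • T.indicT t = ∑ t ∈ K, a t • T.indicT t := by
    refine Finset.sum_subset hsub₁ fun t ht hnt => ?_
    have h0 : ¬ 0 < a t := fun hp => hnt (Finset.mem_filter.2 ⟨ht, hp⟩)
    have : a t = 0 := le_antisymm (not_lt.1 h0) (ha t ht)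
    simp [this]
  have e₂ : ∑ t ∈ S₂, a' t • T.indicT t = ∑ t ∈ K, a' t • T.indicT t := by
    refine Finset.sum_subset hsub₂ fun t ht hnt => ?_
    have h0 : ¬ 0 < a' t := fun hp => hnt (Finset.mem_filter.2 ⟨ht, hp⟩)
    have : a' t = 0 := le_antisymm (not_lt.1 h0) (ha' t ht)
    simp [this]
  have H := huniq S₁ S₂ a a' (subBundle hsub₁ hK) (subBundle hsub₂ hK)
    (fun t ht => (Finset.mem_filter.1 ht).2) (fun t ht => (Finset.mem_filter.1 ht).2)
    (e₁.trans (h.trans e₂.symm))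
  intro t ht
  by_cases hp : 0 < a t
  · obtain ⟨t₂, ht₂, heq, hval⟩ := H.1 t (Finset.mem_filter.2 ⟨ht, hp⟩)
    have := hK.2.2 t ht t₂ (hsub₂ ht₂) heq
    rw [← this] at hval
    exact hval
  · have ha0 : a t = 0 := le_antisymm (not_lt.1 hp) (ha t ht)
    by_cases hp' : 0 < a' t
    · obtain ⟨t₁, ht₁, heq, hval⟩ := H.2 t (Finset.mem_filter.2 ⟨ht, hp'⟩)
      have he := hK.2.2 t₁ (hsub₁ ht₁) t ht heq
      rw [he] at ht₁
      exact absurd (Finset.mem_filter.1 ht₁).2 hp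
    · rw [ha0, le_antisymm (not_lt.1 hp') (ha' t ht)]

lemma indicT_ne_zero {K : Finset (List T.H × Bool)} (hK : T.IsBundle R K)
    (huniq : T.UniquePositiveCombos R) {t : List T.H × Bool} (ht : t ∈ K) :
    T.indicT t ≠ 0 := by
  intro h0
  have h1 : T.IsBundle R ({t} : Finset _) := subBundle (Finset.singleton_subset_iff.2 ht) hK
  have h2 : T.IsBundle R (∅ : Finset _) := subBundle (Finset.empty_subset K) hK
  have H := (huniq {t} ∅ (fun _ => 1) (fun _ => 1) h1 h2 (fun _ _ => one_pos)
    (fun t h => absurd h (Finset.notMem_empty t))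
    (by simp [h0])).1 t (Finset.mem_singleton_self t)
  obtain ⟨t₂, ht₂, -⟩ := H
  exact Finset.notMem_empty t₂ ht₂

end Aux

/-- For a bundle `K̄ = K ∪ B` of a framed turbulence chart, assuming
uniqueness of positive bundle combinations, the bundle simplihedron `Δ₁(K̄)` has
vertex set exactly the indicator vectors of the routes of `K̄`, its recession cone is
minimally generated by the indicator vectors of the bands of `K̄`, and `Δ₁(K̄)` is a
simplihedron: every point has a unique coefficient representation. -/
theorem bundle_simplihedron_minimal_presentation (T : TurbChart) (R : Framing T)
    (K : Finset (List T.H × Bool)) (hK : T.IsBundle R K)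
    (huniq : T.UniquePositiveCombos R) :
    -- vertex set = route indicators
    (Set.extremePoints ℝ (T.unitBundleSimplihedron K) =
      T.indicT '' {t | t ∈ K ∧ t.2 = false}) ∧
    -- the recession cone is generated by the band indicators ...
    ((T.unitBundleSimplihedron K).Nonempty →
      {d : T.H → ℝ | ∀ F ∈ T.unitBundleSimplihedron K, ∀ s : ℝ, 0 ≤ s →
          F + s • d ∈ T.unitBundleSimplihedron K} =
        {d | ∃ b : List T.H × Bool → ℝ,
          (∀ t ∈ K.filter (fun t => t.2 = true), 0 ≤ b t) ∧
          d = ∑ t ∈ K.filter (fun t => t.2 = true), b t • T.indicT t}) ∧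
    -- ... minimally: no band indicator is a nonnegative combination of the others
    (∀ t ∈ K, t.2 = true →
      ¬ ∃ b : List T.H × Bool → ℝ,
        (∀ t' ∈ (K.filter (fun t' => t'.2 = true)).erase t, 0 ≤ b t') ∧
        T.indicT t =
          ∑ t' ∈ (K.filter (fun t' => t'.2 = true)).erase t, b t' • T.indicT t') ∧
    -- Δ₁(K̄) is simplicial: unique coefficient representation of each point
    (∀ F ∈ T.unitBundleSimplihedron K,
      ∃! a : List T.H × Bool → ℝ,
        (∀ t, t ∉ K → a t = 0) ∧ (∀ t, 0 ≤ a t) ∧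
        F = ∑ t ∈ K, a t • T.indicT t ∧
        ∑ t ∈ K.filter (fun t => t.2 = false), a t = 1) := by
  classical
  have hδsum : ∀ p ∈ K, ∑ t ∈ K, (if t = p then (1:ℝ) else 0) • T.indicT t = T.indicT p := by
    intro p hp
    have h1 : ∀ t ∈ K, (if t = p then (1:ℝ) else 0) • T.indicT t
        = if t = p then T.indicT p else 0 := by
      intro t _; by_cases h : t = p <;> simp [h]
    rw [Finset.sum_congr rfl h1, Finset.sum_ite_eq' K p, if_pos hp]
  refine ⟨?_, ?_, ?_, ?_⟩
  · -- PART 1: extreme points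
    ext F
    constructor
    · rintro ⟨hF, hext⟩
      obtain ⟨a, ha0, hFa, hs⟩ := hF
      -- all band coefficients vanish
      have hband : ∀ t₀ ∈ K, t₀.2 = true → a t₀ = 0 := by
        intro t₀ ht₀ hb
        by_contra hne
        have hpos : 0 < a t₀ := lt_of_le_of_ne (ha0 t₀ ht₀) (Ne.symm hne)
        have hrep : ∀ c : ℝ, 0 ≤ c →
            F + (c - 1) • (a t₀ • T.indicT t₀) ∈ T.unitBundleSimplihedron K := by
          intro c hc
          refine ⟨fun t => if t = t₀ then c * a t₀ else a t, ?_, ?_, ?_⟩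
          · intro t ht
            by_cases h : t = t₀
            · simp [h, mul_nonneg hc (ha0 t₀ ht₀)]
            · simp [h, ha0 t ht]
          · beta_reduce
            have key : ∀ t ∈ K, (if t = t₀ then c * a t₀ else a t) • T.indicT t
                = a t • T.indicT t + (if t = t₀ then (c - 1) • (a t₀ • T.indicT t₀) else 0) := by
              intro t _
              by_cases h : t = t₀
              · subst h
                rw [if_pos rfl, if_pos rfl, smul_smul, ← add_smul]
                congr 1; ring
              · rw [if_neg h, if_neg h, add_zero]
            rw [Finset.sum_congr rfl key, Finset.sum_add_distrib,
              Finset.sum_ite_eq' K t₀, if_pos ht₀, ← hFa]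
          · beta_reduce
            rw [← hs]
            refine Finset.sum_congr rfl fun t ht => ?_
            rw [if_neg]
            intro h
            rw [h] at ht
            rw [(Finset.mem_filter.1 ht).2] at hb
            exact Bool.false_ne_true hb
        have h1 := hrep 0 le_rfl
        have h2 := hrep 2 (by norm_num)
        have hseg : F ∈ openSegment ℝ (F + ((0:ℝ) - 1) • (a t₀ • T.indicT t₀))
            (F + ((2:ℝ) - 1) • (a t₀ • T.indicT t₀)) :=
          ⟨1/2, 1/2, by norm_num, by norm_num, by norm_num, by module⟩
        have he := hext h1 h2 hseg
        have hv0 : ((0:ℝ) - 1) • (a t₀ • T.indicT t₀) = 0 := by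
          have := congrArg (fun G => G - F) he
          simpa using this
        have : a t₀ • T.indicT t₀ = 0 := by
          have h01 : ((0:ℝ) - 1) ≠ 0 := by norm_num
          exact (smul_eq_zero.1 hv0).resolve_left h01
        exact indicT_ne_zero hK huniq ht₀ ((smul_eq_zero.1 this).resolve_left hne)
      -- at most one positive route coefficient
      have hone : ∀ p ∈ K, p.2 = false → ∀ q ∈ K, q.2 = false →
          0 < a p → 0 < a q → p = q := by
        intro p hp hpf q hq hqf hap haq
        by_contra hpq
        set ε := min (a p) (a q) with hε
        have hε0 : 0 < ε := lt_min hap haq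
        have hεp : ε ≤ a p := min_le_left _ _
        have hεq : ε ≤ a q := min_le_right _ _
        have hcombo : ∀ s : ℝ, ∑ t ∈ K,
            (if t = p then a p + s * ε else if t = q then a q - s * ε else a t) • T.indicT t
            = F + (s * ε) • T.indicT p - (s * ε) • T.indicT q := by
          intro s
          have key : ∀ t ∈ K,
              (if t = p then a p + s * ε else if t = q then a q - s * ε else a t) • T.indicT t
              = a t • T.indicT t + (if t = p then (s * ε) • T.indicT p else 0)
                - (if t = q then (s * ε) • T.indicT q else 0) := by
            intro t _
            by_cases h : t = p
            · subst h
              rw [if_pos rfl, if_pos rfl, if_neg hpq, sub_zero, add_smul]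
            · rw [if_neg h, if_neg h]
              by_cases h' : t = q
              · subst h'
                rw [if_pos rfl, if_pos rfl, add_zero, sub_smul]
              · rw [if_neg h', if_neg h', add_zero, sub_zero]
          rw [Finset.sum_congr rfl key, Finset.sum_sub_distrib, Finset.sum_add_distrib,
            Finset.sum_ite_eq' K p, Finset.sum_ite_eq' K q, if_pos hp, if_pos hq, ← hFa]
        have hsumf : ∀ s : ℝ, ∑ t ∈ K.filter (fun t => t.2 = false),
            (if t = p then a p + s * ε else if t = q then a q - s * ε else a t) = 1 := by
          intro s
          have key : ∀ t ∈ K.filter (fun t => t.2 = false),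
              (if t = p then a p + s * ε else if t = q then a q - s * ε else a t)
              = a t + (if t = p then s * ε else 0) - (if t = q then s * ε else 0) := by
            intro t _
            by_cases h : t = p
            · subst h; rw [if_pos rfl, if_pos rfl, if_neg hpq, sub_zero]
            · rw [if_neg h, if_neg h]
              by_cases h' : t = q
              · subst h'; rw [if_pos rfl, if_pos rfl, add_zero]
              · rw [if_neg h', if_neg h', add_zero, sub_zero]
          rw [Finset.sum_congr rfl key, Finset.sum_sub_distrib, Finset.sum_add_distrib,
            Finset.sum_ite_eq' _ p, Finset.sum_ite_eq' _ q,
            if_pos (Finset.mem_filter.2 ⟨hp, hpf⟩), if_pos (Finset.mem_filter.2 ⟨hq, hqf⟩),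
            hs]
          ring
        have hrep : ∀ s : ℝ, -1 ≤ s → s ≤ 1 →
            F + (s * ε) • T.indicT p - (s * ε) • T.indicT q ∈ T.unitBundleSimplihedron K := by
          intro s hs1 hs2
          refine ⟨fun t => if t = p then a p + s * ε else if t = q then a q - s * ε else a t,
            ?_, (hcombo s).symm, hsumf s⟩
          intro t ht
          beta_reduce
          by_cases h : t = p
          · rw [if_pos h]; nlinarith
          · rw [if_neg h]
            by_cases h' : t = q
            · rw [if_pos h']; nlinarith
            · rw [if_neg h']; exact ha0 t ht
        have h1 := hrep 1 (by norm_num) le_rfl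
        have h2 := hrep (-1) le_rfl (by norm_num)
        have hseg : F ∈ openSegment ℝ
            (F + ((1:ℝ) * ε) • T.indicT p - ((1:ℝ) * ε) • T.indicT q)
            (F + ((-1:ℝ) * ε) • T.indicT p - ((-1:ℝ) * ε) • T.indicT q) :=
          ⟨1/2, 1/2, by norm_num, by norm_num, by norm_num, by module⟩
        have he := hext h1 h2 hseg
        have hcc : ∑ t ∈ K,
            (if t = p then a p + 1 * ε else if t = q then a q - 1 * ε else a t) • T.indicT t
            = ∑ t ∈ K, a t • T.indicT t := by
          rw [hcombo 1, he]
          exact hFa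
        have hfin := coeff_unique hK huniq
          (fun t ht => by
            by_cases h : t = p
            · rw [if_pos h]; nlinarith
            · rw [if_neg h]
              by_cases h' : t = q
              · rw [if_pos h']; nlinarith
              · rw [if_neg h']; exact ha0 t ht)
          ha0 hcc p hp
        rw [if_pos rfl] at hfin
        linarith
      -- extract the unique route
      have hex : ∃ p ∈ K.filter (fun t => t.2 = false), a p ≠ 0 := by
        by_contra hcon
        push_neg at hcon
        exact one_ne_zero (hs.symm.trans (Finset.sum_eq_zero hcon))
      obtain ⟨p, hpf', hap⟩ := hex
      obtain ⟨hpK, hpf⟩ := Finset.mem_filter.1 hpf'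
      have hap' : 0 < a p := lt_of_le_of_ne (ha0 p hpK) (Ne.symm hap)
      have hzero : ∀ t ∈ K, t ≠ p → a t = 0 := by
        intro t ht htp
        rcases Bool.eq_false_or_eq_true t.2 with hb | hb
        · exact hband t ht hb
        · by_contra hne
          have hat : 0 < a t := lt_of_le_of_ne (ha0 t ht) (Ne.symm hne)
          exact htp (hone t ht hb p hpK hpf hat hap')
      have hap1 : a p = 1 := by
        rw [← hs]
        exact (Finset.sum_eq_single_of_mem p hpf' fun t ht htp =>
          hzero t (Finset.mem_of_mem_filter t ht) htp).symm
      have hFp : F = T.indicT p := by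
        rw [hFa, Finset.sum_eq_single_of_mem p hpK (fun t ht htp => by
          rw [hzero t ht htp, zero_smul]), hap1, one_smul]
      exact ⟨p, ⟨hpK, hpf⟩, hFp.symm⟩
    · rintro ⟨p, ⟨hpK, hpf⟩, rfl⟩
      have hpfil : p ∈ K.filter (fun t => t.2 = false) := Finset.mem_filter.2 ⟨hpK, hpf⟩
      have hδs : ∑ t ∈ K.filter (fun t => t.2 = false), (if t = p then (1:ℝ) else 0) = 1 := by
        rw [Finset.sum_ite_eq' _ p, if_pos hpfil]
      have hmem : T.indicT p ∈ T.unitBundleSimplihedron K :=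
        ⟨fun t => if t = p then 1 else 0,
         fun t ht => by beta_reduce; split <;> norm_num,
         (hδsum p hpK).symm, hδs⟩
      refine ⟨hmem, ?_⟩
      rintro x₁ hx₁ x₂ hx₂ ⟨c, d, hc, hd, hcd, hsum2⟩
      obtain ⟨a₁, ha₁0, hx₁a, hs₁⟩ := hx₁
      obtain ⟨a₂, ha₂0, hx₂a, hs₂⟩ := hx₂
      have hcomb : ∑ t ∈ K, (c * a₁ t + d * a₂ t) • T.indicT t
          = ∑ t ∈ K, (if t = p then (1:ℝ) else 0) • T.indicT t := by
        have e1 : ∀ t ∈ K, (c * a₁ t + d * a₂ t) • T.indicT t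
            = c • (a₁ t • T.indicT t) + d • (a₂ t • T.indicT t) := by
          intro t _; rw [add_smul, smul_smul, smul_smul]
        rw [Finset.sum_congr rfl e1, Finset.sum_add_distrib, ← Finset.smul_sum,
          ← Finset.smul_sum, ← hx₁a, ← hx₂a, hsum2, hδsum p hpK]
      have heq := coeff_unique hK huniq
        (fun t ht => add_nonneg (mul_nonneg hc.le (ha₁0 t ht)) (mul_nonneg hd.le (ha₂0 t ht)))
        (fun t _ => by split <;> norm_num) hcomb
      have hz : ∀ t ∈ K, t ≠ p → a₁ t = 0 ∧ a₂ t = 0 := by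
        intro t ht htp
        have h0 := heq t ht
        rw [if_neg htp] at h0
        have h1 : 0 ≤ c * a₁ t := mul_nonneg hc.le (ha₁0 t ht)
        have h2 : 0 ≤ d * a₂ t := mul_nonneg hd.le (ha₂0 t ht)
        have hc1 : c * a₁ t = 0 := by linarith
        have hc2 : d * a₂ t = 0 := by linarith
        exact ⟨(mul_eq_zero.1 hc1).resolve_left hc.ne',
          (mul_eq_zero.1 hc2).resolve_left hd.ne'⟩
      have ha₁p : a₁ p = 1 := by
        rw [← hs₁]
        exact (Finset.sum_eq_single_of_mem p hpfil fun t ht htp =>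
          (hz t (Finset.mem_of_mem_filter t ht) htp).1).symm
      have ha₂p : a₂ p = 1 := by
        rw [← hs₂]
        exact (Finset.sum_eq_single_of_mem p hpfil fun t ht htp =>
          (hz t (Finset.mem_of_mem_filter t ht) htp).2).symm
      · rw [hx₁a, Finset.sum_eq_single_of_mem p hpK (fun t ht htp => by
          rw [(hz t ht htp).1, zero_smul]), ha₁p, one_smul]
  · -- PART 2: recession cone
    rintro ⟨F₀, hF₀⟩
    ext d
    simp only [Set.mem_setOf_eq]
    constructor
    · intro hd
      obtain ⟨a, ha0, hFa, hs⟩ := hF₀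
      have hmem : ∀ n : ℕ, ∃ e : List T.H × Bool → ℝ,
          (∀ t ∈ K, 0 ≤ e t) ∧ (F₀ + (n:ℝ) • d = ∑ t ∈ K, e t • T.indicT t) ∧
          ∑ t ∈ K.filter (fun t => t.2 = false), e t = 1 := fun n =>
        hd F₀ ⟨a, ha0, hFa, hs⟩ (n:ℝ) (Nat.cast_nonneg n)
      choose e he0 hee hes using hmem
      have hhalf : ∀ (x y : List T.H × Bool → ℝ),
          ∑ t ∈ K, ((x t + y t) / 2) • T.indicT t
          = (2:ℝ)⁻¹ • ((∑ t ∈ K, x t • T.indicT t) + ∑ t ∈ K, y t • T.indicT t) := by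
        intro x y
        rw [smul_add, Finset.smul_sum, Finset.smul_sum, ← Finset.sum_add_distrib]
        refine Finset.sum_congr rfl fun t _ => ?_
        rw [smul_smul, smul_smul, ← add_smul]
        congr 1; ring
      have hstep : ∀ n : ℕ, ∀ t ∈ K, e n t = a t + n * (e 1 t - a t) := by
        intro n
        induction n with
        | zero =>
          intro t ht
          have h0 : ∑ t ∈ K, e 0 t • T.indicT t = ∑ t ∈ K, a t • T.indicT t := by
            rw [← hee 0, ← hFa]
            norm_num
          have := coeff_unique hK huniq (he0 0) ha0 h0 t ht
          rw [this]; push_cast; ring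
        | succ n ih =>
          intro t ht
          have hmid : ∑ t ∈ K, ((e (n+1) t + a t) / 2) • T.indicT t
              = ∑ t ∈ K, ((e n t + e 1 t) / 2) • T.indicT t := by
            rw [hhalf, hhalf, ← hee (n+1), ← hee n, ← hee 1, ← hFa]
            push_cast
            module
          have key := coeff_unique hK huniq
            (fun t ht => div_nonneg (add_nonneg (he0 (n+1) t ht) (ha0 t ht)) (by norm_num))
            (fun t ht => div_nonneg (add_nonneg (he0 n t ht) (he0 1 t ht)) (by norm_num))
            hmid t ht
          have key2 : e (n+1) t + a t = e n t + e 1 t := by linarith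
          have ihs := ih t ht
          push_cast
          linear_combination key2 + ihs
      have hb : ∀ t ∈ K, 0 ≤ e 1 t - a t := by
        intro t ht
        by_contra hlt
        push_neg at hlt
        obtain ⟨n, hn⟩ := exists_nat_gt (a t / (a t - e 1 t))
        have hpos : 0 < a t - e 1 t := by linarith
        have h1 : a t < (n:ℝ) * (a t - e 1 t) := (div_lt_iff₀ hpos).1 hn
        have h2 := he0 n t ht
        rw [hstep n t ht] at h2
        nlinarith
      have hroute : ∀ t ∈ K.filter (fun t => t.2 = false), e 1 t - a t = 0 := by
        have hsum0 : ∑ t ∈ K.filter (fun t => t.2 = false), (e 1 t - a t) = 0 := by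
          rw [Finset.sum_sub_distrib, hes 1, hs, sub_self]
        intro t ht
        exact (Finset.sum_eq_zero_iff_of_nonneg fun t' ht' =>
          hb t' (Finset.mem_of_mem_filter t' ht')).1 hsum0 t ht
      refine ⟨fun t => e 1 t - a t, fun t ht => hb t (Finset.mem_of_mem_filter t ht), ?_⟩
      beta_reduce
      have hd1 : d = ∑ t ∈ K, (e 1 t - a t) • T.indicT t := by
        have h1 := hee 1
        push_cast at h1
        rw [one_smul] at h1
        rw [Finset.sum_congr rfl (fun t (_ : t ∈ K) => sub_smul (e 1 t) (a t) (T.indicT t)),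
          Finset.sum_sub_distrib, ← h1, ← hFa]
        abel
      rw [hd1, ← Finset.sum_filter_add_sum_filter_not K (fun t => t.2 = true)
        (fun t => (e 1 t - a t) • T.indicT t)]
      have hz : ∑ t ∈ K.filter (fun t => ¬ t.2 = true), (e 1 t - a t) • T.indicT t = 0 := by
        refine Finset.sum_eq_zero fun t ht => ?_
        obtain ⟨htK, ht2⟩ := Finset.mem_filter.1 ht
        have hf : t.2 = false := by
          rcases Bool.eq_false_or_eq_true t.2 with h | h
          · exact absurd h ht2
          · exact h
        rw [hroute t (Finset.mem_filter.2 ⟨htK, hf⟩), zero_smul]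
      rw [hz, add_zero]
    · rintro ⟨b, hb0, rfl⟩
      intro F hF s hs0
      obtain ⟨a, ha0, hFa, hsum⟩ := hF
      refine ⟨fun t => a t + (if t.2 = true then s * b t else 0), ?_, ?_, ?_⟩
      · intro t ht
        beta_reduce
        by_cases h : t.2 = true
        · rw [if_pos h]
          exact add_nonneg (ha0 t ht) (mul_nonneg hs0 (hb0 t (Finset.mem_filter.2 ⟨ht, h⟩)))
        · rw [if_neg h, add_zero]; exact ha0 t ht
      · beta_reduce
        have key : ∀ t ∈ K, (a t + if t.2 = true then s * b t else 0) • T.indicT t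
            = a t • T.indicT t + (if t.2 = true then (s * b t) • T.indicT t else 0) := by
          intro t _
          by_cases h : t.2 = true
          · rw [if_pos h, if_pos h, add_smul]
          · rw [if_neg h, if_neg h, add_zero, add_zero]
        rw [Finset.sum_congr rfl key, Finset.sum_add_distrib, ← Finset.sum_filter, ← hFa]
        congr 1
        rw [Finset.smul_sum]
        refine Finset.sum_congr rfl fun t _ => ?_
        rw [smul_smul]
      · beta_reduce
        rw [← hsum]
        refine Finset.sum_congr rfl fun t ht => ?_
        have hf : t.2 = false := (Finset.mem_filter.1 ht).2
        rw [if_neg (by simp [hf]), add_zero]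

  · -- PART 3: minimality
    rintro t ht htb ⟨b, hb0, hbsum⟩
    set E := (K.filter (fun t' => t'.2 = true)).erase t with hE
    set S₂ := E.filter (fun t' => 0 < b t') with hS₂def
    have hEK : E ⊆ K := (Finset.erase_subset _ _).trans (Finset.filter_subset _ _)
    have hES : S₂ ⊆ K := (Finset.filter_subset _ _).trans hEK
    have hsum2 : ∑ t' ∈ S₂, b t' • T.indicT t' = ∑ t' ∈ E, b t' • T.indicT t' := by
      refine Finset.sum_subset (Finset.filter_subset _ _) fun t' ht' hnt' => ?_
      have h0 : ¬ 0 < b t' := fun hp => hnt' (Finset.mem_filter.2 ⟨ht', hp⟩)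
      have : b t' = 0 := le_antisymm (not_lt.1 h0) (hb0 t' ht')
      simp [this]
    have hcombo : ∑ t' ∈ ({t} : Finset _), (1:ℝ) • T.indicT t'
        = ∑ t' ∈ S₂, b t' • T.indicT t' := by
      rw [Finset.sum_singleton, one_smul, hsum2, ← hbsum]
    have H := (huniq {t} S₂ (fun _ => 1) b
      (subBundle (Finset.singleton_subset_iff.2 ht) hK) (subBundle hES hK)
      (fun _ _ => one_pos) (fun t' ht' => (Finset.mem_filter.1 ht').2) hcombo).1
      t (Finset.mem_singleton_self t)
    obtain ⟨t₂, ht₂, heq, -⟩ := H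
    have het : t = t₂ := hK.2.2 t ht t₂ (hES ht₂) heq
    have hne : t₂ ≠ t := Finset.ne_of_mem_erase (Finset.mem_of_mem_filter t₂ ht₂)
    exact hne het.symm
  · -- PART 4: unique representation
    intro F hF
    obtain ⟨a, ha0, hFa, hsum⟩ := hF
    refine ⟨fun t => if t ∈ K then a t else 0, ⟨fun t ht => if_neg ht, ?_, ?_, ?_⟩, ?_⟩
    · intro t
      by_cases h : t ∈ K
      · simpa [h] using ha0 t h
      · simp [h]
    · rw [hFa]
      exact Finset.sum_congr rfl fun t ht => by beta_reduce; rw [if_pos ht]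
    · rw [← hsum]
      exact Finset.sum_congr rfl fun t ht => by
        beta_reduce; rw [if_pos (Finset.mem_of_mem_filter t ht)]
    · rintro a' ⟨h0', hnn', hF', hs'⟩
      funext t
      by_cases h : t ∈ K
      · have hcc : ∑ t ∈ K, a' t • T.indicT t = ∑ t ∈ K, a t • T.indicT t := by
          rw [← hF', ← hFa]
        have key := coeff_unique hK huniq (fun t _ => hnn' t) ha0 hcc
        rw [key t h, if_pos h]
      · rw [h0' t h, if_neg h]
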